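/- First return map via the first hitting map of the interval model (Lemma 2.2). Let z ∈ P_c satisfy Im(F(z)) > 0 and ℓ := 2·Im(F(z))·cot β ≤ λ, and set s(x) = x + 1 + ℓ/2. If k(z) < ∞, then R(z) = r'_ℓ(s(Re(F(z)))) − 1 − ℓ/2 + i·Im(F(z)). -/

import Mathlib

open Complex Real Set
open scoped Classical

noncomputable section

/-- The reciprocal golden ratio Φ = (√5 − 1)/2. -/
def Phi : ℝ := (Real.sqrt 5 - 1) / 2

/-- β = (π − |α|)/2. -/
def beta {d : ℕ} (α : Fin d → ℝ) : ℝ := (π - ∑ k, α k) / 2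

/-- σ_j = β + α_1 + … + α_j (partial sums of the angles, shifted by β). -/
def sig {d : ℕ} (α : Fin d → ℝ) (j : ℕ) : ℝ :=
  beta α + ∑ k ∈ Finset.univ.filter (fun k : Fin d => (k : ℕ) < j), α k

/-- θ_j = Σ_{τ(k)<τ(j)} α_k − Σ_{k<j} α_k. -/
def theta {d : ℕ} (α : Fin d → ℝ) (τ : Equiv.Perm (Fin d)) (j : Fin d) : ℝ :=
  (∑ k ∈ Finset.univ.filter (fun k : Fin d => τ k < τ j), α k)
  - ∑ k ∈ Finset.univ.filter (fun k : Fin d => k < j), α k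

/-- The cone P_0 = {z ∈ ℍ : arg z ∈ [0, β)}. -/
def P0 {d : ℕ} (α : Fin d → ℝ) : Set ℂ :=
  {z : ℂ | 0 ≤ z.im ∧ 0 ≤ z.arg ∧ z.arg < beta α}

/-- The middle cones P_1, …, P_d (0-indexed by `j : Fin d`):
P_1 corresponds to arg ∈ [β, β+α_1], and P_j (j ≥ 2) to arg ∈ (σ_{j−1}, σ_j]. -/
def Pmid {d : ℕ} (α : Fin d → ℝ) (j : Fin d) : Set ℂ :=
  {z : ℂ | 0 ≤ z.im ∧
    (if (j : ℕ) = 0 then sig α 0 ≤ z.arg else sig α (j : ℕ) < z.arg) ∧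
    z.arg ≤ sig α ((j : ℕ) + 1)}

/-- The cone P_{d+1} = {z ∈ ℍ : arg z ∈ (π−β, π]}. -/
def Pend {d : ℕ} (α : Fin d → ℝ) : Set ℂ :=
  {z : ℂ | 0 ≤ z.im ∧ π - beta α < z.arg ∧ z.arg ≤ π}

/-- The middle cone P_c = P_1 ∪ … ∪ P_d. -/
def Pc {d : ℕ} (α : Fin d → ℝ) : Set ℂ := ⋃ j, Pmid α j

/-- The exchange map E. -/
def Emap {d : ℕ} (α : Fin d → ℝ) (τ : Equiv.Perm (Fin d)) (z : ℂ) : ℂ :=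
  if h : ∃ j, z ∈ Pmid α j then
    z * Complex.exp ((theta α τ h.choose : ℝ) * Complex.I)
  else z

/-- The translation map G. -/
def Gmap {d : ℕ} (α : Fin d → ℝ) (lam eta : ℝ) (z : ℂ) : ℂ :=
  if z ∈ P0 α then z - 1
  else if z ∈ Pend α then z + (lam : ℂ)
  else if z ∈ Pc α then z - (eta : ℂ)
  else z

/-- The translated cone exchange F = G ∘ E. -/
def Fmap {d : ℕ} (α : Fin d → ℝ) (τ : Equiv.Perm (Fin d)) (lam eta : ℝ) (z : ℂ) : ℂ :=
  Gmap α lam eta (Emap α τ z)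

/-- The set of positive times at which the orbit of z visits P_c. -/
def hitSet {d : ℕ} (α : Fin d → ℝ) (τ : Equiv.Perm (Fin d)) (lam eta : ℝ) (z : ℂ) : Set ℕ :=
  {n : ℕ | 0 < n ∧ (Fmap α τ lam eta)^[n] z ∈ Pc α}

/-- The first hitting time k(z) of z to P_c (0 if the orbit never returns). -/
def hitTime {d : ℕ} (α : Fin d → ℝ) (τ : Equiv.Perm (Fin d)) (lam eta : ℝ) (z : ℂ) : ℕ :=
  sInf (hitSet α τ lam eta z)

/-- The first return map R(z) = F^{k(z)}(z). -/
def Rmap {d : ℕ} (α : Fin d → ℝ) (τ : Equiv.Perm (Fin d)) (lam eta : ℝ) (z : ℂ) : ℂ :=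
  (Fmap α τ lam eta)^[hitTime α τ lam eta z] z

/-- The interval map g_ℓ with middle interval (1, 1+ℓ) of fixed points:
g_ℓ(x) = x+λ on [0,1], x on (1,1+ℓ), x−1 on [1+ℓ, 1+λ]. -/
def gl (lam l x : ℝ) : ℝ :=
  if x ≤ 1 then x + lam else if x < 1 + l then x else x - 1

/-- The interval exchange g(x) = x+λ on [0,1], x−1 on (1, 1+λ]. -/
def g0 (lam x : ℝ) : ℝ := if x ≤ 1 then x + lam else x - 1

/-- The set of positive times at which the g_ℓ-orbit of x visits [1, 1+ℓ]. -/
def hitSetI (lam l x : ℝ) : Set ℕ :=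
  {n : ℕ | 0 < n ∧ (gl lam l)^[n] x ∈ Set.Icc 1 (1 + l)}

/-- The first hitting time n_ℓ(x) of x to [1, 1+ℓ] (as a natural number; 0 if
the orbit never hits). -/
def nhit (lam l x : ℝ) : ℕ := sInf (hitSetI lam l x)

/-- The first hitting time n_ℓ(x) of x to [1, 1+ℓ], with value ∞ ∈ ℕ∪{∞} if the
orbit never hits. -/
def nhitE (lam l x : ℝ) : ℕ∞ := sInf ((fun n : ℕ => (n : ℕ∞)) '' hitSetI lam l x)

/-- The first hitting map r_ℓ(x) = g_ℓ^{n_ℓ(x)}(x). -/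
def rmap (lam l x : ℝ) : ℝ := (gl lam l)^[nhit lam l x] x

/-- r'_ℓ(x) = r_ℓ(x) outside [1,1+ℓ] and x on [1,1+ℓ]. -/
def rmap' (lam l x : ℝ) : ℝ := if x ∈ Set.Icc 1 (1 + l) then x else rmap lam l x

/-- The left bifurcation set Λ_L (hitting times compared in ℕ∪{∞}). -/
def LamL (lam : ℝ) : Set ℝ :=
  {l | 0 < l ∧ l ≤ lam ∧ ∀ l' : ℝ, 0 < l' → l' < l → nhitE lam l 1 < nhitE lam l' 1}

/-- The right bifurcation set Λ_R (hitting times compared in ℕ∪{∞}). -/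
def LamR (lam : ℝ) : Set ℝ :=
  {l | 0 < l ∧ l ≤ lam ∧
    ∀ l' : ℝ, 0 < l' → l' < l → nhitE lam l (1 + l) < nhitE lam l' (1 + l')}


lemma arg_lt_iff' (b : ℝ) (hb0 : 0 < b) (hb2 : b < π/2) (w : ℂ) (hw : 0 < w.im) :
    w.arg < b ↔ w.im * (Real.cos b / Real.sin b) < w.re := by
  have hπ := Real.pi_pos
  have hne : w ≠ 0 := fun hz => by simp [hz] at hw
  have habs : 0 < ‖w‖ := norm_pos_iff.mpr hne
  have hsb : 0 < Real.sin b := Real.sin_pos_of_pos_of_lt_pi hb0 (by linarith)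
  have h0 : 0 < w.arg := by
    rcases (Complex.arg_nonneg_iff.2 hw.le).lt_or_eq with h | h
    · exact h
    · exact absurd (Complex.arg_eq_zero_iff.1 h.symm).2 hw.ne'
  have hπa : w.arg < π := by
    rcases (Complex.arg_le_pi w).lt_or_eq with h | h
    · exact h
    · exact absurd (Complex.arg_eq_pi_iff.1 h).2 hw.ne'
  have hre : w.re = ‖w‖ * Real.cos w.arg := by
    rw [Complex.cos_arg hne]; field_simp
  have him : w.im = ‖w‖ * Real.sin w.arg := by
    rw [Complex.sin_arg]; field_simp
  have key : w.im * Real.cos b < w.re * Real.sin b ↔ 0 < Real.sin (b - w.arg) := by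
    rw [Real.sin_sub, hre, him, mul_assoc, mul_assoc, mul_lt_mul_iff_right₀ habs]
    constructor <;> intro <;> linarith
  have key2 : (0 < Real.sin (b - w.arg)) ↔ w.arg < b := by
    constructor
    · intro hs
      by_contra hc
      push_neg at hc
      have : Real.sin (b - w.arg) ≤ 0 :=
        Real.sin_nonpos_of_nonpos_of_neg_pi_le (by linarith) (by linarith)
      linarith
    · intro hlt
      exact Real.sin_pos_of_pos_of_lt_pi (by linarith) (by linarith)
  rw [← key2, ← key,
    show w.im * (Real.cos b / Real.sin b) = w.im * Real.cos b / Real.sin b from by ring,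
    div_lt_iff₀ hsb]

lemma arg_gt_iff' (b : ℝ) (hb0 : 0 < b) (hb2 : b < π/2) (w : ℂ) (hw : 0 < w.im) :
    π - b < w.arg ↔ w.re < -(w.im * (Real.cos b / Real.sin b)) := by
  have hπ := Real.pi_pos
  have hne : w ≠ 0 := fun hz => by simp [hz] at hw
  have habs : 0 < ‖w‖ := norm_pos_iff.mpr hne
  have hsb : 0 < Real.sin b := Real.sin_pos_of_pos_of_lt_pi hb0 (by linarith)
  have h0 : 0 < w.arg := by
    rcases (Complex.arg_nonneg_iff.2 hw.le).lt_or_eq with h | h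
    · exact h
    · exact absurd (Complex.arg_eq_zero_iff.1 h.symm).2 hw.ne'
  have hπa : w.arg < π := by
    rcases (Complex.arg_le_pi w).lt_or_eq with h | h
    · exact h
    · exact absurd (Complex.arg_eq_pi_iff.1 h).2 hw.ne'
  have hre : w.re = ‖w‖ * Real.cos w.arg := by
    rw [Complex.cos_arg hne]; field_simp
  have him : w.im = ‖w‖ * Real.sin w.arg := by
    rw [Complex.sin_arg]; field_simp
  have key : w.re * Real.sin b < -(w.im * Real.cos b) ↔ Real.sin (w.arg + b) < 0 := by
    rw [Real.sin_add, hre, him, mul_assoc, mul_assoc,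
      show -(‖w‖ * (Real.sin w.arg * Real.cos b))
          = ‖w‖ * (-(Real.sin w.arg * Real.cos b)) from by ring,
      mul_lt_mul_iff_right₀ habs]
    constructor <;> intro <;> linarith
  have key2 : Real.sin (w.arg + b) < 0 ↔ π - b < w.arg := by
    constructor
    · intro hs
      by_contra hc
      push_neg at hc
      have : 0 ≤ Real.sin (w.arg + b) :=
        Real.sin_nonneg_of_nonneg_of_le_pi (by linarith) (by linarith)
      linarith
    · intro hlt
      have h1 : 0 < Real.sin (w.arg + b - π) :=
        Real.sin_pos_of_pos_of_lt_pi (by linarith) (by linarith)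
      have h2 : Real.sin (w.arg + b - π) = -Real.sin (w.arg + b) := Real.sin_sub_pi _
      linarith
  rw [← key2, ← key,
    show -(w.im * (Real.cos b / Real.sin b)) = -(w.im * Real.cos b) / Real.sin b from by ring,
    lt_div_iff₀ hsb]

lemma sig_zero {d : ℕ} (α : Fin d → ℝ) : sig α 0 = beta α := by
  simp [sig]

lemma sig_mono {d : ℕ} (α : Fin d → ℝ) (hpos : ∀ j, 0 < α j) {i j : ℕ} (hij : i ≤ j) :
    sig α i ≤ sig α j := by
  unfold sig
  refine add_le_add_right (Finset.sum_le_sum_of_subset_of_nonneg ?_ fun k _ _ => (hpos k).le) _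
  intro k hk
  simp only [Finset.mem_filter, Finset.mem_univ, true_and] at *
  omega

lemma sig_d {d : ℕ} (α : Fin d → ℝ) : sig α d = π - beta α := by
  unfold sig beta
  rw [Finset.filter_true_of_mem (fun k _ => k.isLt)]
  ring

lemma mem_Pc_iff {d : ℕ} (hd : 1 ≤ d) (α : Fin d → ℝ) (hpos : ∀ j, 0 < α j)
    (w : ℂ) (him : 0 ≤ w.im) :
    w ∈ Pc α ↔ beta α ≤ w.arg ∧ w.arg ≤ π - beta α := by
  constructor
  · intro hw
    rw [Pc, Set.mem_iUnion] at hw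
    obtain ⟨j, hj⟩ := hw
    simp only [Pmid, Set.mem_setOf_eq] at hj
    obtain ⟨-, h1, h2⟩ := hj
    constructor
    · split_ifs at h1 with h0
      · rwa [sig_zero] at h1
      · have := sig_mono α hpos (Nat.zero_le (j : ℕ))
        rw [sig_zero] at this
        linarith
    · have hj1 : (j : ℕ) + 1 ≤ d := j.isLt
      have := sig_mono α hpos hj1
      rw [sig_d] at this
      linarith
  · rintro ⟨h1, h2⟩
    rw [Pc, Set.mem_iUnion]
    have hdS : d ∈ {m : ℕ | w.arg ≤ sig α m} := by
      simp only [Set.mem_setOf_eq, sig_d]; exact h2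
    have hne : ({m : ℕ | w.arg ≤ sig α m}).Nonempty := ⟨d, hdS⟩
    have hmem := Nat.sInf_mem hne
    have hmd : sInf {m : ℕ | w.arg ≤ sig α m} ≤ d := Nat.sInf_le hdS
    simp only [Set.mem_setOf_eq] at hmem
    by_cases h0 : sInf {m : ℕ | w.arg ≤ sig α m} = 0
    · rw [h0, sig_zero] at hmem
      refine ⟨⟨0, hd⟩, ?_⟩
      simp only [Pmid, Set.mem_setOf_eq, Fin.val_mk, if_pos rfl]
      refine ⟨him, by rwa [sig_zero], ?_⟩
      show w.arg ≤ sig α 1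
      have := sig_mono α hpos (Nat.zero_le 1)
      rw [sig_zero] at this
      linarith
    · have hnot := Nat.notMem_of_lt_sInf
        (show sInf {m : ℕ | w.arg ≤ sig α m} - 1 < sInf {m : ℕ | w.arg ≤ sig α m} by omega)
      simp only [Set.mem_setOf_eq, not_le] at hnot
      refine ⟨⟨sInf {m : ℕ | w.arg ≤ sig α m} - 1, by omega⟩, ?_⟩
      simp only [Pmid, Set.mem_setOf_eq, Fin.val_mk]
      refine ⟨him, ?_, ?_⟩
      · split_ifs with hcase
        · rw [hcase] at hnot
          exact hnot.le
        · exact hnot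
      · rw [show sInf {m : ℕ | w.arg ≤ sig α m} - 1 + 1 = sInf {m : ℕ | w.arg ≤ sig α m} by omega]
        exact hmem


def cmap (l h t : ℝ) : ℂ := ((t - 1 - l/2 : ℝ) : ℂ) + (h : ℂ) * Complex.I

lemma cmap_re (l h t : ℝ) : (cmap l h t).re = t - 1 - l/2 := by simp [cmap]

lemma cmap_im (l h t : ℝ) : (cmap l h t).im = h := by simp [cmap]

lemma Emap_id {d : ℕ} (α : Fin d → ℝ) (τ : Equiv.Perm (Fin d)) (w : ℂ) (hw : w ∉ Pc α) :
    Emap α τ w = w := by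
  unfold Emap
  rw [dif_neg]
  rw [Pc] at hw
  simpa [Set.mem_iUnion] using hw

lemma cmap_mem_Pc_iff {d : ℕ} (hd : 1 ≤ d) (α : Fin d → ℝ) (hpos : ∀ j, 0 < α j)
    (hsum : ∑ k, α k < π) (h l t : ℝ) (hh : 0 < h)
    (hldef : l = 2 * h * (Real.cos (beta α) / Real.sin (beta α))) :
    cmap l h t ∈ Pc α ↔ t ∈ Set.Icc 1 (1 + l) := by
  have hπ := Real.pi_pos
  have hsum0 : 0 < ∑ k, α k := Finset.sum_pos (fun i _ => hpos i) ⟨⟨0, hd⟩, Finset.mem_univ _⟩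
  have hb0 : 0 < beta α := by unfold beta; linarith
  have hb2 : beta α < π/2 := by unfold beta; linarith
  have hl2 : h * (Real.cos (beta α) / Real.sin (beta α)) = l / 2 := by rw [hldef]; ring
  have hvpos : 0 < (cmap l h t).im := by rw [cmap_im]; exact hh
  have e1 := arg_lt_iff' (beta α) hb0 hb2 (cmap l h t) hvpos
  have e2 := arg_gt_iff' (beta α) hb0 hb2 (cmap l h t) hvpos
  rw [cmap_im, cmap_re, hl2] at e1 e2
  rw [mem_Pc_iff hd α hpos _ hvpos.le, Set.mem_Icc]
  constructor
  · rintro ⟨ha, hb⟩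
    have h1 : ¬ (l / 2 < t - 1 - l/2) := by rw [← e1]; exact not_lt.2 ha
    have h2 : ¬ (t - 1 - l/2 < -(l / 2)) := by rw [← e2]; exact not_lt.2 hb
    push_neg at h1 h2
    constructor <;> linarith
  · rintro ⟨ha, hb⟩
    constructor
    · refine not_lt.1 fun hc => ?_
      have := e1.1 hc
      linarith
    · refine not_lt.1 fun hc => ?_
      have := e2.1 hc
      linarith

lemma Fstep {d : ℕ} (hd : 1 ≤ d) (α : Fin d → ℝ) (hpos : ∀ j, 0 < α j)
    (hsum : ∑ k, α k < π) (τ : Equiv.Perm (Fin d)) (lam eta : ℝ) (h l : ℝ) (hh : 0 < h)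
    (hldef : l = 2 * h * (Real.cos (beta α) / Real.sin (beta α)))
    (t : ℝ) (ht : cmap l h t ∉ Pc α) :
    Fmap α τ lam eta (cmap l h t) = cmap l h (gl lam l t) := by
  have hπ := Real.pi_pos
  have hsum0 : 0 < ∑ k, α k := Finset.sum_pos (fun i _ => hpos i) ⟨⟨0, hd⟩, Finset.mem_univ _⟩
  have hb0 : 0 < beta α := by unfold beta; linarith
  have hb2 : beta α < π/2 := by unfold beta; linarith
  have hsb : 0 < Real.sin (beta α) := Real.sin_pos_of_pos_of_lt_pi hb0 (by linarith)
  have hcb : 0 < Real.cos (beta α) := Real.cos_pos_of_mem_Ioo ⟨by linarith, hb2⟩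
  have hl0 : 0 < l := by
    rw [hldef]; exact mul_pos (mul_pos (by norm_num) hh) (div_pos hcb hsb)
  have hl2 : h * (Real.cos (beta α) / Real.sin (beta α)) = l / 2 := by rw [hldef]; ring
  have hvpos : 0 < (cmap l h t).im := by rw [cmap_im]; exact hh
  have e1 := arg_lt_iff' (beta α) hb0 hb2 (cmap l h t) hvpos
  have e2 := arg_gt_iff' (beta α) hb0 hb2 (cmap l h t) hvpos
  rw [cmap_im, cmap_re, hl2] at e1 e2
  have htout : t < 1 ∨ 1 + l < t := by
    by_contra hc
    push_neg at hc
    exact ht ((cmap_mem_Pc_iff hd α hpos hsum h l t hh hldef).2 (Set.mem_Icc.2 hc))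
  have hEid : Emap α τ (cmap l h t) = cmap l h t := Emap_id α τ _ ht
  rcases htout with h1 | h1
  · have hargπ : π - beta α < (cmap l h t).arg := e2.2 (by linarith)
    have hP0 : cmap l h t ∉ P0 α := by
      rintro ⟨-, -, hlt⟩
      linarith
    have hPe : cmap l h t ∈ Pend α := ⟨hvpos.le, hargπ, Complex.arg_le_pi _⟩
    have hgl : gl lam l t = t + lam := by unfold gl; rw [if_pos h1.le]
    unfold Fmap Gmap
    rw [hEid, if_neg hP0, if_pos hPe, hgl]
    apply Complex.ext
    · rw [Complex.add_re, cmap_re, cmap_re, Complex.ofReal_re]; ring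
    · rw [Complex.add_im, cmap_im, cmap_im, Complex.ofReal_im]; ring
  · have harg : (cmap l h t).arg < beta α := e1.2 (by linarith)
    have hP0 : cmap l h t ∈ P0 α := ⟨hvpos.le, Complex.arg_nonneg_iff.2 hvpos.le, harg⟩
    have hgl : gl lam l t = t - 1 := by
      unfold gl
      rw [if_neg (by linarith), if_neg (by linarith)]
    unfold Fmap Gmap
    rw [hEid, if_pos hP0, hgl]
    apply Complex.ext
    · rw [Complex.sub_re, cmap_re, cmap_re, Complex.one_re]; ring
    · rw [Complex.sub_im, cmap_im, cmap_im, Complex.one_im]; ring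

/-- **Lemma 2.2 (first return map via the first hitting map of the interval
model).** For z ∈ P_c with Im(F(z)) > 0 and ℓ = 2·Im(F(z))·cot β ≤ λ, if the
return time of z to P_c is finite then
R(z) = r'_ℓ(s(Re F(z))) − 1 − ℓ/2 + i·Im F(z), where s(x) = x + 1 + ℓ/2. -/
theorem return_map_via_hitting_map
    (d : ℕ) (hd : 1 ≤ d) (α : Fin d → ℝ) (hpos : ∀ j, 0 < α j) (hsum : ∑ k, α k < π)
    (τ : Equiv.Perm (Fin d)) (lam eta : ℝ)
    (hlam : 0 < lam) (hirr : Irrational lam) (heta0 : 0 < eta) (hetal : eta < lam)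
    (z : ℂ) (hz : z ∈ Pc α)
    (him : 0 < (Fmap α τ lam eta z).im)
    (l : ℝ) (hldef : l = 2 * (Fmap α τ lam eta z).im * (Real.cos (beta α) / Real.sin (beta α)))
    (hl : l ≤ lam)
    (hfin : (hitSet α τ lam eta z).Nonempty) :
    Rmap α τ lam eta z =
      Complex.ofReal (rmap' lam l ((Fmap α τ lam eta z).re + 1 + l / 2) - 1 - l / 2)
        + Complex.ofReal (Fmap α τ lam eta z).im * Complex.I := by
  have hπ := Real.pi_pos
  have hsum0 : 0 < ∑ k, α k := Finset.sum_pos (fun i _ => hpos i) ⟨⟨0, hd⟩, Finset.mem_univ _⟩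
  have hb0 : 0 < beta α := by unfold beta; linarith
  have hb2 : beta α < π/2 := by unfold beta; linarith
  have hsb : 0 < Real.sin (beta α) := Real.sin_pos_of_pos_of_lt_pi hb0 (by linarith)
  have hcb : 0 < Real.cos (beta α) := Real.cos_pos_of_mem_Ioo ⟨by linarith, hb2⟩
  set w := Fmap α τ lam eta z with hwdef
  have hl0 : 0 < l := by
    rw [hldef]
    exact mul_pos (mul_pos (by norm_num) him) (div_pos hcb hsb)
  set x := w.re + 1 + l / 2 with hxdef
  have hwx : cmap l w.im x = w := by
    apply Complex.ext
    · rw [cmap_re, hxdef]; ring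
    · rw [cmap_im]
  have hmemc : ∀ t : ℝ, (cmap l w.im t ∈ Pc α ↔ t ∈ Set.Icc 1 (1 + l)) :=
    fun t => cmap_mem_Pc_iff hd α hpos hsum w.im l t him hldef
  have orb : ∀ n : ℕ, (∀ m, 1 ≤ m → m ≤ n → (Fmap α τ lam eta)^[m] z ∉ Pc α) →
      (Fmap α τ lam eta)^[n + 1] z = cmap l w.im ((gl lam l)^[n] x) := by
    intro n
    induction n with
    | zero =>
      intro _
      rw [Function.iterate_one, Function.iterate_zero, id, ← hwdef]
      exact hwx.symm
    | succ n ih =>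
      intro hyp
      have h1 : (Fmap α τ lam eta)^[n + 1] z = cmap l w.im ((gl lam l)^[n] x) :=
        ih fun m hm1 hm2 => hyp m hm1 (hm2.trans (Nat.le_succ n))
      have hnot : cmap l w.im ((gl lam l)^[n] x) ∉ Pc α := by
        rw [← h1]; exact hyp (n + 1) (by omega) le_rfl
      rw [Function.iterate_succ_apply', h1,
        Fstep hd α hpos hsum τ lam eta w.im l him hldef _ hnot,
        ← Function.iterate_succ_apply' (gl lam l) n x]
  have hk : hitTime α τ lam eta z ∈ hitSet α τ lam eta z := Nat.sInf_mem hfin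
  obtain ⟨hk0, hkPc⟩ := hk
  by_cases hk1 : hitTime α τ lam eta z = 1
  · have hFz : w ∈ Pc α := by
      rw [hk1, Function.iterate_one, ← hwdef] at hkPc; exact hkPc
    have hx : x ∈ Set.Icc 1 (1 + l) := (hmemc x).1 (by rw [hwx]; exact hFz)
    have hr : rmap' lam l x = x := by rw [rmap', if_pos hx]
    show (Fmap α τ lam eta)^[hitTime α τ lam eta z] z = _
    rw [hk1, Function.iterate_one, ← hwdef, hr]
    exact hwx.symm
  · have hk2 : 2 ≤ hitTime α τ lam eta z := by omega
    have hnot : ∀ m, 1 ≤ m → m ≤ hitTime α τ lam eta z - 1 →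
        (Fmap α τ lam eta)^[m] z ∉ Pc α := by
      intro m hm1 hm2 hmem
      have hle : hitTime α τ lam eta z ≤ m := Nat.sInf_le ⟨hm1, hmem⟩
      omega
    have hFk : (Fmap α τ lam eta)^[hitTime α τ lam eta z] z
        = cmap l w.im ((gl lam l)^[hitTime α τ lam eta z - 1] x) := by
      have := orb (hitTime α τ lam eta z - 1) hnot
      rwa [show hitTime α τ lam eta z - 1 + 1 = hitTime α τ lam eta z by omega] at this
    have hgk : (gl lam l)^[hitTime α τ lam eta z - 1] x ∈ Set.Icc 1 (1 + l) :=
      (hmemc _).1 (by rw [← hFk]; exact hkPc)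
    have hmemI : hitTime α τ lam eta z - 1 ∈ hitSetI lam l x := ⟨by omega, hgk⟩
    have hnhit : nhit lam l x = hitTime α τ lam eta z - 1 := by
      refine le_antisymm (Nat.sInf_le hmemI) ?_
      by_contra hc
      push_neg at hc
      have hmem' : nhit lam l x ∈ hitSetI lam l x := Nat.sInf_mem ⟨_, hmemI⟩
      obtain ⟨hn0, hnI⟩ := hmem'
      have horb := orb (nhit lam l x) fun m hm1 hm2 => hnot m hm1 (by omega)
      have hout : (Fmap α τ lam eta)^[nhit lam l x + 1] z ∉ Pc α :=
        hnot (nhit lam l x + 1) (by omega) (by omega)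
      rw [horb] at hout
      exact hout ((hmemc _).2 hnI)
    have hxnot : x ∉ Set.Icc 1 (1 + l) := by
      intro hxm
      have h1m : (1 : ℕ) ∈ hitSet α τ lam eta z := by
        refine ⟨Nat.one_pos, ?_⟩
        rw [Function.iterate_one, ← hwdef, ← hwx]
        exact (hmemc x).2 hxm
      have hle1 : hitTime α τ lam eta z ≤ 1 := Nat.sInf_le h1m
      omega
    have hr : rmap' lam l x = (gl lam l)^[hitTime α τ lam eta z - 1] x := by
      rw [rmap', if_neg hxnot, rmap, hnhit]
    show (Fmap α τ lam eta)^[hitTime α τ lam eta z] z = _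
    rw [hFk, hr]
    rfl

end
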